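/- Let m ≥ 5 be an integer with gcd(m,3) = 1. Then for every integer x ≥ 1, |S_m(x)| ≤ μ_m · x^{λ_m}. -/

import Mathlib

open Finset Filter Topology

noncomputable section

/-- `s n` is the number of 1's in the binary expansion of `n`. -/
def s (n : ℕ) : ℕ := (Nat.digits 2 n).count 1

/-- `S m x = ∑_{0 ≤ n < x, m ∣ n} (-1)^(s n)`. -/
def S (m x : ℕ) : ℝ := ∑ n ∈ Finset.range x, if m ∣ n then (-1 : ℝ) ^ (s n) else 0

/-- `F α N = ∑_{n=0}^{N-1} e^{2πi(αn + s(n)/2)}`. -/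
def F (α : ℝ) (N : ℕ) : ℂ :=
  ∑ n ∈ Finset.range N, Complex.exp (2 * Real.pi * Complex.I * ((α : ℂ) * n + (s n : ℂ) / 2))

/-- `bsq m = b_m ^ 2`, defined by cases on `m mod 3`. -/
def bsq (m : ℕ) : ℝ :=
  if m % 3 = 0 then
    Real.sin (Real.pi / 3 * (1 + 3 / m)) * (Real.sqrt 3 - Real.sin (Real.pi / 3 * (1 + 3 / m)))
  else if m % 3 = 1 then
    Real.sin (Real.pi / 3 * (1 - 1 / m)) * (Real.sqrt 3 - Real.sin (Real.pi / 3 * (1 - 1 / m)))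
  else
    Real.sin (Real.pi / 3 * (1 + 1 / m)) * (Real.sqrt 3 - Real.sin (Real.pi / 3 * (1 + 1 / m)))

/-- `b m` is the positive real number with `(b m)^2 = bsq m`. -/
def b (m : ℕ) : ℝ := Real.sqrt (bsq m)

/-- `lam m = λ_m = 1 + log₂ b_m`. -/
def lam (m : ℕ) : ℝ := 1 + Real.logb 2 (b m)

/-- `mu m = μ_m = (2 b_m + 1)/(2 b_m - 1)`. -/
def mu (m : ℕ) : ℝ := (2 * b m + 1) / (2 * b m - 1)

/-- `U m x`: positive integers `≤ x` divisible by `m` and not by 3. -/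
def U (m x : ℕ) : Finset ℕ := (Finset.Icc 1 x).filter (fun n => m ∣ n ∧ ¬ (3 ∣ n))

/-- `V p n`: positive integers `≤ n` whose least prime divisor is `p`. -/
def V (p n : ℕ) : Finset ℕ := (Finset.Icc 1 n).filter (fun j => Nat.minFac j = p)

def nu (m : ℕ) : ℝ := 3 / (4 * bsq m - 1)

lemma s_zero : s 0 = 0 := by simp [s]

lemma s_two_mul (j : ℕ) : s (2 * j) = s j := by
  rcases Nat.eq_zero_or_pos j with rfl | hj
  · rfl
  unfold s
  rw [Nat.digits_def' (by norm_num) (by positivity)]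
  simp [Nat.mul_div_cancel_left, Nat.mul_mod_right]

lemma s_two_mul_add_one (j : ℕ) : s (2 * j + 1) = s j + 1 := by
  unfold s
  rw [Nat.digits_def' (by norm_num) (by positivity)]
  have : (2 * j + 1) / 2 = j := by omega
  rw [this, Nat.mul_add_mod]
  simp [add_comm]

lemma abs_term (z : ℝ) : ‖Complex.exp (2 * Real.pi * Complex.I * (z : ℂ))‖ = 1 := by
  rw [Complex.norm_exp]
  simp [Complex.mul_re, Complex.mul_im]

lemma sum_range_double (f : ℕ → ℂ) (q : ℕ) :
    ∑ n ∈ Finset.range (2 * q), f n = ∑ j ∈ Finset.range q, (f (2 * j) + f (2 * j + 1)) := by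
  induction q with
  | zero => simp
  | succ n ih =>
    rw [Finset.sum_range_succ, ← ih, Nat.mul_succ, Finset.sum_range_succ, Finset.sum_range_succ]
    ring_nf

lemma abs_one_sub_exp (θ : ℝ) :
    ‖1 - Complex.exp ((θ : ℂ) * Complex.I)‖ = 2 * |Real.sin (θ / 2)| := by
  have h1 : (1 : ℂ) - Complex.exp ((θ : ℂ) * Complex.I)
      = Complex.exp (((θ / 2 : ℝ) : ℂ) * Complex.I) *
        (-2 * Complex.I * Complex.sin ((θ / 2 : ℝ) : ℂ)) := by
    rw [Complex.sin]
    rw [show (-2 : ℂ) * Complex.I * ((Complex.exp (-((θ/2:ℝ):ℂ) * Complex.I) -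
        Complex.exp (((θ/2:ℝ):ℂ) * Complex.I)) * Complex.I / 2)
      = (Complex.exp (-((θ/2:ℝ):ℂ) * Complex.I) - Complex.exp (((θ/2:ℝ):ℂ) * Complex.I)) *
        (-(Complex.I*Complex.I)) by ring, Complex.I_mul_I]
    rw [show (Complex.exp (-((θ/2:ℝ):ℂ) * Complex.I) - Complex.exp (((θ/2:ℝ):ℂ) * Complex.I)) * - -1
      = Complex.exp (-((θ/2:ℝ):ℂ) * Complex.I) - Complex.exp (((θ/2:ℝ):ℂ) * Complex.I) by ring]
    rw [mul_sub, ← Complex.exp_add, ← Complex.exp_add]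
    rw [show ((θ/2:ℝ):ℂ) * Complex.I + -((θ/2:ℝ):ℂ) * Complex.I = 0 by ring]
    rw [show ((θ/2:ℝ):ℂ) * Complex.I + ((θ/2:ℝ):ℂ) * Complex.I = (θ:ℂ) * Complex.I by push_cast; ring]
    rw [Complex.exp_zero]
  rw [h1, norm_mul, Complex.norm_exp_ofReal_mul_I]
  have : Complex.sin (((θ/2:ℝ)):ℂ) = ((Real.sin (θ/2) : ℝ) : ℂ) := (Complex.ofReal_sin _).symm
  rw [this, norm_mul, norm_mul, Complex.norm_real, Real.norm_eq_abs]
  simp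

lemma abs_term' (α : ℝ) (n : ℕ) :
    ‖Complex.exp (2 * Real.pi * Complex.I * ((α : ℂ) * n + (s n : ℂ) / 2))‖ = 1 := by
  rw [Complex.norm_exp]
  have h : (2 * (Real.pi:ℂ) * Complex.I * ((α : ℂ) * n + (s n : ℂ) / 2)).re = 0 := by
    simp [Complex.mul_re, Complex.mul_im]
  rw [h, Real.exp_zero]

lemma abs_F_le (α : ℝ) (x : ℕ) : ‖F α x‖ ≤ x := by
  unfold F
  refine le_trans (norm_sum_le _ _) ?_
  rw [Finset.sum_congr rfl (fun n _ => abs_term' α n)]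
  simp

lemma F_two_mul (α : ℝ) (q : ℕ) :
    F α (2*q) = (1 - Complex.exp (((2*Real.pi*α : ℝ) : ℂ) * Complex.I)) * F (2*α) q := by
  unfold F
  rw [sum_range_double, Finset.mul_sum]
  refine Finset.sum_congr rfl fun j _ => ?_
  have e1 : 2 * (Real.pi:ℂ) * Complex.I * ((α : ℂ) * (2*j:ℕ) + (s (2*j) : ℂ) / 2)
      = 2 * (Real.pi:ℂ) * Complex.I * (((2*α : ℝ):ℂ) * j + (s j : ℂ) / 2) := by
    rw [s_two_mul]; push_cast; ring
  have e2 : 2 * (Real.pi:ℂ) * Complex.I * ((α : ℂ) * (2*j+1:ℕ) + (s (2*j+1) : ℂ) / 2)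
      = 2 * (Real.pi:ℂ) * Complex.I * (((2*α : ℝ):ℂ) * j + (s j : ℂ) / 2)
        + (((2*Real.pi*α : ℝ) : ℂ) * Complex.I + (Real.pi:ℂ) * Complex.I) := by
    rw [s_two_mul_add_one]; push_cast; ring
  rw [e1, e2, Complex.exp_add, Complex.exp_add, Complex.exp_pi_mul_I]
  ring

lemma F_rec (α : ℝ) (x : ℕ) :
    ‖F α x‖ ≤ 2 * |Real.sin (Real.pi * α)| * ‖F (2*α) (x/2)‖ + 1 := by
  have key : ‖F α (2*(x/2))‖
      = 2 * |Real.sin (Real.pi * α)| * ‖F (2*α) (x/2)‖ := by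
    rw [F_two_mul, norm_mul, abs_one_sub_exp]
    congr 2
    ring
  rcases Nat.even_or_odd x with ⟨k, hk⟩ | ⟨k, hk⟩
  · have hx : x = 2*(x/2) := by omega
    calc ‖F α x‖ = ‖F α (2*(x/2))‖ := by rw [← hx]
    _ = 2 * |Real.sin (Real.pi * α)| * ‖F (2*α) (x/2)‖ := key
    _ ≤ _ := by linarith
  · have hx : x = 2*(x/2) + 1 := by omega
    have hsplit : F α x = F α (2*(x/2)) +
        Complex.exp (2 * Real.pi * Complex.I * ((α : ℂ) * (2*(x/2):ℕ) + (s (2*(x/2)) : ℂ) / 2)) := by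
      conv_lhs => rw [hx]
      exact Finset.sum_range_succ _ _
    calc ‖F α x‖ ≤ ‖F α (2*(x/2))‖ + 1 := by
          rw [hsplit]
          refine le_trans (norm_add_le _ _) ?_
          rw [abs_term']
    _ = _ := by rw [key]

lemma sum_exp_unity (m n : ℕ) (hm : 0 < m) :
    ∑ a ∈ Finset.range m, Complex.exp (2*Real.pi*Complex.I*((n:ℂ)/(m:ℂ)))^a
      = if m ∣ n then (m:ℂ) else 0 := by
  have hm0 : (m:ℂ) ≠ 0 := Nat.cast_ne_zero.mpr hm.ne'
  by_cases h : m ∣ n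
  · obtain ⟨t, rfl⟩ := h
    have : 2*(Real.pi:ℂ)*Complex.I*(((m*t:ℕ):ℂ)/(m:ℂ)) = (t:ℤ) * (2*(Real.pi:ℂ)*Complex.I) := by
      push_cast
      field_simp
    rw [this, Complex.exp_int_mul_two_pi_mul_I]
    simp [dvd_mul_right]
  · have hpi : (2*(Real.pi:ℂ)*Complex.I) ≠ 0 := by
      simp [Real.pi_ne_zero, Complex.I_ne_zero, Complex.ofReal_ne_zero]
    have hz : Complex.exp (2*Real.pi*Complex.I*((n:ℂ)/(m:ℂ))) ≠ 1 := by
      intro hc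
      rw [Complex.exp_eq_one_iff] at hc
      obtain ⟨k, hk⟩ := hc
      have hk' : (2*(Real.pi:ℂ)*Complex.I) * ((n:ℂ)/(m:ℂ)) = (2*(Real.pi:ℂ)*Complex.I) * (k:ℂ) := by
        rw [hk]; ring
      have h2 : (n:ℂ)/(m:ℂ) = (k:ℂ) := mul_left_cancel₀ hpi hk'
      have h3 : (n:ℂ) = (k:ℂ) * (m:ℂ) := by
        field_simp at h2
        linear_combination h2
      have h4 : (n:ℤ) = k * (m:ℤ) := by exact_mod_cast h3
      exact h (Int.natCast_dvd_natCast.mp ⟨k, by rw [h4]; ring⟩)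
    have hzm : Complex.exp (2*Real.pi*Complex.I*((n:ℂ)/(m:ℂ)))^m = 1 := by
      rw [← Complex.exp_nat_mul]
      have : (m:ℂ) * (2*Real.pi*Complex.I*((n:ℂ)/(m:ℂ))) = (n:ℤ) * (2*(Real.pi:ℂ)*Complex.I) := by
        push_cast
        field_simp
      rw [this, Complex.exp_int_mul_two_pi_mul_I]
    rw [geom_sum_eq hz, hzm]
    simp [h]

lemma S_eq (m x : ℕ) (hm : 0 < m) :
    (m : ℂ) * ((S m x : ℝ) : ℂ) = ∑ a ∈ Finset.range m, F ((a : ℝ)/(m:ℝ)) x := by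
  unfold F
  have hterm : ∀ a n : ℕ,
      Complex.exp (2 * Real.pi * Complex.I * ((((a:ℝ)/(m:ℝ) : ℝ):ℂ) * n + (s n : ℂ) / 2))
      = Complex.exp (2*Real.pi*Complex.I*((n:ℂ)/(m:ℂ)))^a * (-1:ℂ)^(s n) := by
    intro a n
    rw [← Complex.exp_pi_mul_I, ← Complex.exp_nat_mul, ← Complex.exp_nat_mul, ← Complex.exp_add]
    congr 1
    push_cast
    ring
  rw [Finset.sum_congr rfl (fun a _ => Finset.sum_congr rfl (fun n _ => hterm a n)),
    Finset.sum_comm]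
  have : ∀ n : ℕ, ∑ a ∈ Finset.range m,
      Complex.exp (2*Real.pi*Complex.I*((n:ℂ)/(m:ℂ)))^a * (-1:ℂ)^(s n)
      = (if m ∣ n then (m:ℂ) else 0) * (-1:ℂ)^(s n) := by
    intro n
    rw [← Finset.sum_mul, sum_exp_unity m n hm]
  rw [Finset.sum_congr rfl (fun n _ => this n)]
  unfold S
  push_cast
  rw [Finset.mul_sum]
  refine Finset.sum_congr rfl fun n _ => ?_
  split_ifs <;> simp

lemma sin_range_bounds {θ : ℝ} (h1 : Real.pi/4 ≤ θ) (h2 : θ ≤ Real.pi/2) :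
    1/2 ≤ Real.sin θ * (Real.sqrt 3 - Real.sin θ) ∧
    Real.sin θ * (Real.sqrt 3 - Real.sin θ) ≤ 3/4 := by
  have hs1 : Real.sin (Real.pi/4) ≤ Real.sin θ := by
    apply Real.sin_le_sin_of_le_of_le_pi_div_two _ h2 h1
    nlinarith [Real.pi_pos]
  rw [Real.sin_pi_div_four] at hs1
  have hs2 : Real.sin θ ≤ 1 := Real.sin_le_one θ
  have e2 : Real.sqrt 2 ^ 2 = 2 := Real.sq_sqrt (by norm_num)
  have e3 : Real.sqrt 3 ^ 2 = 3 := Real.sq_sqrt (by norm_num)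
  have p2 : (0:ℝ) ≤ Real.sqrt 2 := Real.sqrt_nonneg 2
  have p3 : (0:ℝ) ≤ Real.sqrt 3 := Real.sqrt_nonneg 3
  constructor
  · nlinarith [mul_nonneg (sub_nonneg.mpr hs1) (sub_nonneg.mpr hs2),
      sq_nonneg (Real.sqrt 3 - Real.sqrt 2), sq_nonneg (Real.sqrt 2 - 14/10), sq_nonneg (Real.sqrt 3 - 17/10)]
  · nlinarith [sq_nonneg (Real.sin θ - Real.sqrt 3/2)]

lemma bsq_bounds (m : ℕ) (hm : 5 ≤ m) (h3 : m % 3 ≠ 0) : 1/2 ≤ bsq m ∧ bsq m ≤ 3/4 := by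
  have hmr : (5:ℝ) ≤ m := by exact_mod_cast hm
  have hmp : (0:ℝ) < m := by linarith
  have hpi := Real.pi_pos
  have key : ∀ c : ℝ, 3/4 ≤ c → c ≤ 3/2 →
      1/2 ≤ Real.sin (Real.pi/3 * c) * (Real.sqrt 3 - Real.sin (Real.pi/3 * c)) ∧
      Real.sin (Real.pi/3 * c) * (Real.sqrt 3 - Real.sin (Real.pi/3 * c)) ≤ 3/4 := by
    intro c hc1 hc2
    apply sin_range_bounds
    · nlinarith
    · nlinarith
  unfold bsq
  rw [if_neg h3]
  have h1m : 1/(m:ℝ) ≤ 1/5 := by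
    rw [div_le_div_iff₀ hmp (by norm_num)]; linarith
  have h1m' : 0 < 1/(m:ℝ) := by positivity
  by_cases h1 : m % 3 = 1
  · rw [if_pos h1]
    exact key _ (by linarith) (by linarith)
  · rw [if_neg h1]
    exact key _ (by linarith) (by linarith)

section consts
variable (m : ℕ) (hm : 5 ≤ m) (h3 : m % 3 ≠ 0)

lemma b_sq (m : ℕ) (hm : 5 ≤ m) (h3 : m % 3 ≠ 0) : b m ^ 2 = bsq m :=
  Real.sq_sqrt (by linarith [(bsq_bounds m hm h3).1])

lemma b_pos (m : ℕ) (hm : 5 ≤ m) (h3 : m % 3 ≠ 0) : 0 < b m :=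
  Real.sqrt_pos.mpr (by linarith [(bsq_bounds m hm h3).1])

lemma b_gt_half (m : ℕ) (hm : 5 ≤ m) (h3 : m % 3 ≠ 0) : 1/2 < b m := by
  have h1 := b_sq m hm h3
  have h2 := b_pos m hm h3
  nlinarith [(bsq_bounds m hm h3).1]

lemma b_le_one (m : ℕ) (hm : 5 ≤ m) (h3 : m % 3 ≠ 0) : b m ≤ 1 := by
  have h1 := b_sq m hm h3
  have h2 := b_pos m hm h3
  nlinarith [(bsq_bounds m hm h3).2]

lemma lam_nonneg (m : ℕ) (hm : 5 ≤ m) (h3 : m % 3 ≠ 0) : 0 ≤ lam m := by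
  unfold lam
  have h1 : Real.logb 2 (1/2) ≤ Real.logb 2 (b m) :=
    Real.logb_le_logb_of_le (by norm_num) (by norm_num) (le_of_lt (b_gt_half m hm h3))
  have h2 : Real.logb 2 (1/2) = -1 := by
    rw [show (1:ℝ)/2 = 2⁻¹ by norm_num, Real.logb_inv, Real.logb_self_eq_one] <;> norm_num
  linarith

lemma two_rpow_lam (m : ℕ) (hm : 5 ≤ m) (h3 : m % 3 ≠ 0) : (2:ℝ) ^ (lam m) = 2 * b m := by
  unfold lam
  rw [Real.rpow_add (by norm_num), Real.rpow_one,
    Real.rpow_logb (by norm_num) (by norm_num) (b_pos m hm h3)]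

lemma four_rpow_lam (m : ℕ) (hm : 5 ≤ m) (h3 : m % 3 ≠ 0) : (4:ℝ) ^ (lam m) = 4 * bsq m := by
  have h4 : (4:ℝ) = (2:ℝ) ^ (2:ℝ) := by
    rw [show (2:ℝ) = ((2:ℕ):ℝ) by norm_num, Real.rpow_natCast]; norm_num
  rw [h4, ← Real.rpow_mul (by norm_num)]
  rw [show (2:ℝ) * lam m = lam m + lam m by ring, Real.rpow_add (by norm_num),
    two_rpow_lam m hm h3, ← b_sq m hm h3]
  ring

lemma mu_pos (m : ℕ) (hm : 5 ≤ m) (h3 : m % 3 ≠ 0) : 0 < mu m := by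
  unfold mu
  have := b_gt_half m hm h3
  apply div_pos <;> linarith

lemma nu_pos (m : ℕ) (hm : 5 ≤ m) (h3 : m % 3 ≠ 0) : 0 < nu m := by
  unfold nu
  have := (bsq_bounds m hm h3).1
  apply div_pos <;> linarith

lemma C1 (m : ℕ) (hm : 5 ≤ m) (h3 : m % 3 ≠ 0) : 1 ≤ mu m - nu m := by
  have hb := b_gt_half m hm h3
  have hsq := b_sq m hm h3
  have h1 := (bsq_bounds m hm h3).1
  unfold mu nu
  rw [div_sub_div _ _ (by linarith) (by nlinarith), le_div_iff₀ (by nlinarith)]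
  nlinarith

lemma C2 (m : ℕ) (hm : 5 ≤ m) (h3 : m % 3 ≠ 0) : 3 ≤ mu m * (2 * b m) - nu m := by
  have hb := b_gt_half m hm h3
  have hsq := b_sq m hm h3
  have h1 := (bsq_bounds m hm h3).1
  unfold mu nu
  rw [div_mul_eq_mul_div, div_sub_div _ _ (by linarith) (by nlinarith), le_div_iff₀ (by nlinarith)]
  have hnn : (0:ℝ) ≤ (2*b m - 1) * (2*b m) * (4*(b m)^2 - 2*b m + 1) := by
    apply mul_nonneg (mul_nonneg (by linarith) (by linarith))
    nlinarith [sq_nonneg (2*b m - 1)]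
  nlinarith [hnn]

lemma step1 (m : ℕ) (hm : 5 ≤ m) (h3 : m % 3 ≠ 0) : 1 ≤ nu m * (2 * b m - 1) := by
  have hb := b_gt_half m hm h3
  have hb1 := b_le_one m hm h3
  have hsq := b_sq m hm h3
  have h1 := (bsq_bounds m hm h3).1
  unfold nu
  rw [div_mul_eq_mul_div, le_div_iff₀ (by nlinarith)]
  nlinarith

lemma step2 (m : ℕ) (hm : 5 ≤ m) (h3 : m % 3 ≠ 0) : 4 * bsq m * nu m = nu m + 3 := by
  have h1 := (bsq_bounds m hm h3).1
  have hne : 4*bsq m - 1 ≠ 0 := by nlinarith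
  unfold nu
  field_simp
  ring

end consts

-- pointwise algebra bound
lemma G1 (θ : ℝ) :
    |Real.sin θ| * min |Real.sin θ| |Real.sin (2*θ)| ≤
      3/4 - (|Real.sin θ| - Real.sqrt 3 / 2)^2 := by
  set s := |Real.sin θ| with hs
  set c := |Real.cos θ| with hc
  have hsc : s^2 + c^2 = 1 := by
    rw [hs, hc, sq_abs, sq_abs]
    exact Real.sin_sq_add_cos_sq θ
  have hs2 : |Real.sin (2*θ)| = 2 * s * c := by
    rw [Real.sin_two_mul, abs_mul, abs_mul, abs_two]
  have hsn : 0 ≤ s := abs_nonneg _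
  have hcn : 0 ≤ c := abs_nonneg _
  have e3 : Real.sqrt 3 ^ 2 = 3 := Real.sq_sqrt (by norm_num)
  have p3 : (0:ℝ) ≤ Real.sqrt 3 := Real.sqrt_nonneg 3
  rw [hs2]
  by_cases hcase : 1 ≤ 2*c
  · have hmin : min s (2*s*c) = s := by
      apply min_eq_left
      nlinarith
    rw [hmin]
    -- s ≤ √3/2 since c ≥ 1/2
    have hsb : s^2 ≤ 3/4 := by nlinarith
    have hsb' : s ≤ Real.sqrt 3 / 2 := by nlinarith
    nlinarith
  · push_neg at hcase
    have hmin : min s (2*s*c) = 2*s*c := by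
      apply min_eq_right
      nlinarith
    rw [hmin]
    -- key : s*(2c+1) ≤ √3
    have hkey : s * (2*c+1) ≤ Real.sqrt 3 := by
      have h1 : (s*(2*c+1))^2 ≤ 3 := by nlinarith [sq_nonneg c, sq_nonneg (2*c-1)]
      nlinarith [sq_nonneg (s*(2*c+1) - Real.sqrt 3)]
    nlinarith

lemma rsin_add_sin (x y : ℝ) :
    Real.sin x + Real.sin y = 2 * Real.sin ((x+y)/2) * Real.cos ((x-y)/2) := by
  have s1 := Real.sin_add ((x+y)/2) ((x-y)/2)
  have s2 := Real.sin_sub ((x+y)/2) ((x-y)/2)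
  have e1 : (x+y)/2 + (x-y)/2 = x := by ring
  have e2 : (x+y)/2 - (x-y)/2 = y := by ring
  rw [e1] at s1
  rw [e2] at s2
  linarith

set_option maxHeartbeats 1000000 in
-- key inequality, case m % 3 = 1 (m = 3k+1) : sin(πk/m) + sin(π(k+1)/m) ≥ √3
lemma KI1 (m k : ℕ) (hm : 7 ≤ m) (hk : m = 3*k+1) :
    Real.sqrt 3 ≤ Real.sin (Real.pi*((k:ℝ)/m)) + Real.sin (Real.pi*(((k+1:ℕ):ℝ)/m)) := by
  have hpi := Real.pi_pos
  have hpil := Real.pi_le_four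
  have hpig := Real.pi_gt_three
  have hmr : (7:ℝ) ≤ m := by exact_mod_cast hm
  have hm0 : (0:ℝ) < m := by linarith
  set u := Real.pi/(6*m) with hu
  have hu0 : 0 < u := by positivity
  have hub : u ≤ 4/42 := by
    rw [hu, div_le_div_iff₀ (by positivity) (by norm_num)]
    nlinarith
  have hsum : Real.sin (Real.pi*((k:ℝ)/m)) + Real.sin (Real.pi*(((k+1:ℕ):ℝ)/m))
      = 2 * Real.sin (Real.pi/3 + u) * Real.cos (3*u) := by
    rw [rsin_add_sin]
    have hkr : (k:ℝ) = ((m:ℝ)-1)/3 := by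
      have : (m:ℝ) = 3*(k:ℝ)+1 := by exact_mod_cast hk
      linarith
    have e1 : (Real.pi*((k:ℝ)/m) + Real.pi*(((k+1:ℕ):ℝ)/m))/2 = Real.pi/3 + u := by
      rw [hu]
      push_cast
      rw [hkr]
      field_simp
      ring
    have e2 : (Real.pi*((k:ℝ)/m) - Real.pi*(((k+1:ℕ):ℝ)/m))/2 = -(3*u) := by
      rw [hu]
      push_cast
      field_simp
      ring
    rw [e1, e2, Real.cos_neg]
  rw [hsum, Real.sin_add, Real.sin_pi_div_three, Real.cos_pi_div_three]
  have e3 : Real.sqrt 3 ^ 2 = 3 := Real.sq_sqrt (by norm_num)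
  have p3 : (0:ℝ) ≤ Real.sqrt 3 := Real.sqrt_nonneg 3
  have ht : Real.sqrt 3 ≤ 1.7321 := by nlinarith
  have ht' : (1.73:ℝ) ≤ Real.sqrt 3 := by nlinarith
  have hcu : 1 - u^2/2 ≤ Real.cos u := Real.one_sub_sq_div_two_le_cos
  have hcu1 : Real.cos u ≤ 1 := Real.cos_le_one u
  have hsu : u - u^3/4 ≤ Real.sin u := le_of_lt (lt_of_le_of_lt (by have := pow_pos hu0 3; linarith) (Real.sin_gt_sub_cube hu0))
  have hsu1 : Real.sin u ≤ u := Real.sin_le (le_of_lt hu0)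
  have hc3 : 1 - (3*u)^2/2 ≤ Real.cos (3*u) := Real.one_sub_sq_div_two_le_cos
  have hc31 : Real.cos (3*u) ≤ 1 := Real.cos_le_one _
  -- goal : √3 ≤ 2*(√3/2 * cos u + 1/2 * sin u) * cos (3u)
  have hA : Real.sqrt 3 * (1 - u^2/2) + (u - u^3/4) ≤
      Real.sqrt 3 * Real.cos u + Real.sin u := by nlinarith
  have hApos : (0:ℝ) ≤ Real.sqrt 3 * (1 - u^2/2) + (u - u^3/4) := by nlinarith
  have hDpos : (0:ℝ) ≤ 1 - (3*u)^2/2 := by nlinarith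
  have hprod : (Real.sqrt 3 * (1 - u^2/2) + (u - u^3/4)) * (1 - (3*u)^2/2) ≤
      (Real.sqrt 3 * Real.cos u + Real.sin u) * Real.cos (3*u) :=
    mul_le_mul hA hc3 hDpos (by nlinarith)
  have hlow : Real.sqrt 3 ≤ (Real.sqrt 3 * (1 - u^2/2) + (u - u^3/4)) * (1 - (3*u)^2/2) := by
    nlinarith [sq_nonneg u, sq_nonneg (u*u), hu0.le]
  nlinarith

set_option maxHeartbeats 1000000 in
-- key inequality, case m % 3 = 2 (m = 3k+2) : sin(πk/m) + sin(π(k+1)/m) ≤ √3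
lemma KI2 (m k : ℕ) (hm : 5 ≤ m) (hk : m = 3*k+2) :
    Real.sin (Real.pi*((k:ℝ)/m)) + Real.sin (Real.pi*(((k+1:ℕ):ℝ)/m)) ≤ Real.sqrt 3 := by
  have hpi := Real.pi_pos
  have hmr : (5:ℝ) ≤ m := by exact_mod_cast hm
  have hm0 : (0:ℝ) < m := by linarith
  set u := Real.pi/(6*m) with hu
  have hu0 : 0 < u := by positivity
  have hsum : Real.sin (Real.pi*((k:ℝ)/m)) + Real.sin (Real.pi*(((k+1:ℕ):ℝ)/m))
      = 2 * Real.sin (Real.pi/3 - u) * Real.cos (3*u) := by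
    rw [rsin_add_sin]
    have hkr : (k:ℝ) = ((m:ℝ)-2)/3 := by
      have : (m:ℝ) = 3*(k:ℝ)+2 := by exact_mod_cast hk
      linarith
    have e1 : (Real.pi*((k:ℝ)/m) + Real.pi*(((k+1:ℕ):ℝ)/m))/2 = Real.pi/3 - u := by
      rw [hu]
      push_cast
      rw [hkr]
      field_simp
      ring
    have e2 : (Real.pi*((k:ℝ)/m) - Real.pi*(((k+1:ℕ):ℝ)/m))/2 = -(3*u) := by
      rw [hu]
      push_cast
      field_simp
      ring
    rw [e1, e2, Real.cos_neg]
  rw [hsum]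
  have hub : u ≤ Real.pi/30 := by
    rw [hu, div_le_div_iff₀ (by positivity) (by norm_num)]
    nlinarith
  have h1 : Real.sin (Real.pi/3 - u) ≤ Real.sin (Real.pi/3) := by
    apply Real.sin_le_sin_of_le_of_le_pi_div_two (by nlinarith) (by nlinarith) (by nlinarith)
  have h2 : 0 ≤ Real.sin (Real.pi/3 - u) := by
    apply Real.sin_nonneg_of_nonneg_of_le_pi
    · nlinarith
    · nlinarith
  have h3 : Real.cos (3*u) ≤ 1 := Real.cos_le_one _
  rw [Real.sin_pi_div_three] at h1
  nlinarith

lemma sin_mono_nat (m i j : ℕ) (hm : 0 < m) (hij : i ≤ j) (hj : 2*j ≤ m) :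
    Real.sin (Real.pi*((i:ℝ)/m)) ≤ Real.sin (Real.pi*((j:ℝ)/m)) := by
  have hpi := Real.pi_pos
  have hm0 : (0:ℝ) < m := by exact_mod_cast hm
  have hijr : (i:ℝ) ≤ j := by exact_mod_cast hij
  have hjr : 2*(j:ℝ) ≤ m := by exact_mod_cast hj
  apply Real.sin_le_sin_of_le_of_le_pi_div_two
  · have : (0:ℝ) ≤ Real.pi*((i:ℝ)/m) := by positivity
    linarith
  · rw [show Real.pi*((j:ℝ)/m) = Real.pi*(j:ℝ)/m by ring, div_le_div_iff₀ hm0 (by norm_num)]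
    nlinarith
  · apply mul_le_mul_of_nonneg_left _ (le_of_lt hpi)
    gcongr


set_option maxHeartbeats 1000000 in
lemma grid_nat (m : ℕ) (hm : 5 ≤ m) (h3 : m % 3 ≠ 0) (r : ℕ) (hr : 2*r ≤ m) :
    Real.sin (Real.pi*((r:ℝ)/m)) *
      min (Real.sin (Real.pi*((r:ℝ)/m))) |Real.sin (2*(Real.pi*((r:ℝ)/m)))| ≤ bsq m := by
  have hpi := Real.pi_pos
  have hm0 : (0:ℝ) < m := by exact_mod_cast (by omega : 0 < m)
  have e3 : Real.sqrt 3 ^ 2 = 3 := Real.sq_sqrt (by norm_num)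
  have p3 : (0:ℝ) ≤ Real.sqrt 3 := Real.sqrt_nonneg 3
  set k := m/3 with hk
  -- θr nonneg and ≤ π
  have hθnn : 0 ≤ Real.sin (Real.pi*((r:ℝ)/m)) := by
    apply Real.sin_nonneg_of_nonneg_of_le_pi
    · positivity
    · have hrm : (r:ℝ) ≤ m := by
        have : (r:ℕ) ≤ m := by omega
        exact_mod_cast this
      rw [show Real.pi*((r:ℝ)/m) = Real.pi*(r:ℝ)/m by ring]
      rw [div_le_iff₀ hm0]
      nlinarith
  have habs : |Real.sin (Real.pi*((r:ℝ)/m))| = Real.sin (Real.pi*((r:ℝ)/m)) :=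
    abs_of_nonneg hθnn
  have hG1 := G1 (Real.pi*((r:ℝ)/m))
  rw [habs] at hG1
  set sr := Real.sin (Real.pi*((r:ℝ)/m)) with hsr
  set sk := Real.sin (Real.pi*((k:ℝ)/m)) with hskdef
  set sk1 := Real.sin (Real.pi*(((k+1:ℕ):ℝ)/m)) with hsk1def
  -- monotonicity facts
  have hsin3 : Real.sin (Real.pi/3) = Real.sqrt 3 / 2 := Real.sin_pi_div_three
  have hkm : 3*k+1 = m ∨ 3*k+2 = m := by omega
  have hk1le : 2*(k+1) ≤ m := by omega
  have hskle : sk ≤ Real.sqrt 3/2 := by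
    rw [hskdef, ← hsin3]
    apply Real.sin_le_sin_of_le_of_le_pi_div_two
    · have : (0:ℝ) ≤ Real.pi*((k:ℝ)/m) := by positivity
      linarith
    · linarith
    · rw [show Real.pi*((k:ℝ)/m) = Real.pi*(k:ℝ)/m by ring, div_le_div_iff₀ hm0 (by norm_num)]
      have : (3*(k:ℝ)) ≤ m := by
        have : 3*k ≤ m := by omega
        exact_mod_cast this
      nlinarith
  have hsk1ge : Real.sqrt 3/2 ≤ sk1 := by
    rw [hsk1def, ← hsin3]
    apply Real.sin_le_sin_of_le_of_le_pi_div_two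
    · nlinarith
    · rw [show Real.pi*(((k+1:ℕ):ℝ)/m) = Real.pi*((k+1:ℕ):ℝ)/m by ring,
        div_le_div_iff₀ hm0 (by norm_num)]
      have : 2*((k+1:ℕ):ℝ) ≤ m := by exact_mod_cast hk1le
      nlinarith
    · rw [show Real.pi*(((k+1:ℕ):ℝ)/m) = Real.pi*((k+1:ℕ):ℝ)/m by ring,
        le_div_iff₀ hm0]
      have : (m:ℝ) ≤ 3*((k+1:ℕ):ℝ) := by
        have : m ≤ 3*(k+1) := by omega
        exact_mod_cast this
      nlinarith
  -- the min-deviation bound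
  have hdev : (sk - Real.sqrt 3/2)^2 ≤ (sr - Real.sqrt 3/2)^2 ∨
      (sk1 - Real.sqrt 3/2)^2 ≤ (sr - Real.sqrt 3/2)^2 := by
    rcases le_or_gt r k with hrk | hrk
    · left
      have hmono : sr ≤ sk := sin_mono_nat m r k (by omega) hrk (by omega)
      nlinarith [mul_nonneg (sub_nonneg.2 hmono) (by nlinarith : (0:ℝ) ≤ Real.sqrt 3 - sr - sk)]
    · right
      have hmono : sk1 ≤ sr := sin_mono_nat m (k+1) r (by omega) (by omega) hr
      nlinarith [mul_nonneg (sub_nonneg.2 hmono) (by nlinarith : (0:ℝ) ≤ sr + sk1 - Real.sqrt 3)]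
  -- identify bsq
  rcases hkm with hm1 | hm2
  · -- m = 3k+1
    have hm7 : 7 ≤ m := by omega
    have hbsq : bsq m = 3/4 - (sk - Real.sqrt 3/2)^2 := by
      have h1 : m % 3 = 1 := by omega
      unfold bsq
      rw [if_neg h3, if_pos h1]
      have harg : Real.pi / 3 * (1 - 1/(m:ℝ)) = Real.pi*((k:ℝ)/m) := by
        have hmr : (m:ℝ) = 3*(k:ℝ)+1 := by exact_mod_cast hm1.symm
        field_simp
        rw [hmr]
        ring
      rw [harg, ← hskdef]
      linear_combination (1/4) * e3
    have hKI := KI1 m k hm7 hm1.symm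
    rw [← hskdef, ← hsk1def] at hKI
    have htarget : (sk - Real.sqrt 3/2)^2 ≤ (sr - Real.sqrt 3/2)^2 := by
      rcases hdev with h | h
      · exact h
      · -- (sk1-√3/2)² ≥ (sk−√3/2)² ... need other direction:
        -- from KI1 : sk1 - √3/2 ≥ √3/2 - sk ≥ 0
        nlinarith
    rw [hbsq]
    nlinarith
  · -- m = 3k+2
    have hbsq : bsq m = 3/4 - (sk1 - Real.sqrt 3/2)^2 := by
      have h1 : m % 3 = 2 := by omega
      have h1' : ¬ (m % 3 = 1) := by omega
      unfold bsq
      rw [if_neg h3, if_neg h1']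
      have harg : Real.pi / 3 * (1 + 1/(m:ℝ)) = Real.pi*(((k+1:ℕ):ℝ)/m) := by
        have hmr : (m:ℝ) = 3*(k:ℝ)+2 := by exact_mod_cast hm2.symm
        push_cast
        field_simp
        rw [hmr]
        ring
      rw [harg, ← hsk1def]
      linear_combination (1/4) * e3
    have hKI := KI2 m k hm hm2.symm
    rw [← hskdef, ← hsk1def] at hKI
    have htarget : (sk1 - Real.sqrt 3/2)^2 ≤ (sr - Real.sqrt 3/2)^2 := by
      rcases hdev with h | h
      · nlinarith
      · exact h
    rw [hbsq]
    nlinarith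

lemma abs_sin_shift (x : ℝ) (q : ℤ) : |Real.sin (x + q*Real.pi)| = |Real.sin x| := by
  rw [Real.sin_add_int_mul_pi, abs_mul]
  have : |((-1:ℝ))^q| = 1 := by
    rcases Int.even_or_odd q with hq | hq
    · rw [hq.neg_one_zpow]; norm_num
    · rw [Odd.neg_one_zpow hq]; norm_num
  rw [this, one_mul]

lemma sin_nat_nonneg (m r : ℕ) (hm : 0 < m) (hrm : r ≤ m) :
    0 ≤ Real.sin (Real.pi*((r:ℝ)/m)) := by
  have hpi := Real.pi_pos
  have hm0 : (0:ℝ) < m := by exact_mod_cast hm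
  apply Real.sin_nonneg_of_nonneg_of_le_pi
  · positivity
  · have hrm' : (r:ℝ) ≤ m := by exact_mod_cast hrm
    rw [show Real.pi*((r:ℝ)/m) = Real.pi*(r:ℝ)/m by ring, div_le_iff₀ hm0]
    nlinarith

lemma grid (m : ℕ) (hm : 5 ≤ m) (h3 : m % 3 ≠ 0) (a : ℤ) :
    |Real.sin (Real.pi * ((a:ℝ)/(m:ℝ)))| *
      min |Real.sin (Real.pi * ((a:ℝ)/(m:ℝ)))| |Real.sin (Real.pi * (((2*a:ℤ):ℝ)/(m:ℝ)))|
      ≤ bsq m := by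
  have hmz : (0:ℤ) < (m:ℤ) := by exact_mod_cast (by omega : 0 < m)
  have hm0 : (0:ℝ) < m := by exact_mod_cast (by omega : 0 < m)
  set q := a / (m:ℤ) with hq
  set r0 := a % (m:ℤ) with hr0
  have h0 : 0 ≤ r0 := Int.emod_nonneg a (by omega)
  have h1 : r0 < m := Int.emod_lt_of_pos a hmz
  have ha : a = (m:ℤ)*q + r0 := by rw [hq, hr0, Int.mul_ediv_add_emod]
  by_cases hc : 2*r0 ≤ (m:ℤ)
  · set r : ℕ := r0.toNat with hrdef
    have hr : (r:ℤ) = r0 := Int.toNat_of_nonneg h0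
    have hcast : (a:ℝ) = (m:ℝ)*(q:ℝ) + (r:ℝ) := by
      have h' : a = (m:ℤ)*q + (r:ℤ) := by rw [hr]; exact ha
      exact_mod_cast congrArg (Int.cast : ℤ → ℝ) h'
    have hra : (a:ℝ)/m = (r:ℝ)/m + (q:ℝ) := by
      rw [hcast]
      field_simp
      ring
    have e0 : Real.pi*((a:ℝ)/m) = Real.pi*((r:ℝ)/m) + (q:ℤ)*Real.pi := by
      rw [hra]; push_cast; ring
    have e1 : Real.pi*(((2*a:ℤ):ℝ)/m) = 2*(Real.pi*((r:ℝ)/m)) + ((2*q:ℤ):ℝ)*Real.pi := by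
      push_cast
      rw [show 2*(a:ℝ)/m = 2*((a:ℝ)/m) by ring, hra]
      ring
    rw [e0, e1, abs_sin_shift, abs_sin_shift,
      abs_of_nonneg (sin_nat_nonneg m r (by omega) (by omega))]
    exact grid_nat m hm h3 r (by omega)
  · push_neg at hc
    set r : ℕ := ((m:ℤ) - r0).toNat with hrdef
    have hr : (r:ℤ) = (m:ℤ) - r0 := Int.toNat_of_nonneg (by omega)
    have hcast : (a:ℝ) = (m:ℝ)*((q:ℝ)+1) - (r:ℝ) := by
      have h' : a = (m:ℤ)*(q+1) - (r:ℤ) := by rw [hr, ha]; ring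
      have := congrArg (Int.cast : ℤ → ℝ) h'
      push_cast at this
      linarith
    have hra : (a:ℝ)/m = -((r:ℝ)/m) + ((q:ℝ)+1) := by
      rw [hcast]
      field_simp
      ring
    have e0 : Real.pi*((a:ℝ)/m) = -(Real.pi*((r:ℝ)/m)) + ((q+1:ℤ):ℝ)*Real.pi := by
      rw [hra]; push_cast; ring
    have e1 : Real.pi*(((2*a:ℤ):ℝ)/m) = -(2*(Real.pi*((r:ℝ)/m))) + ((2*(q+1):ℤ):ℝ)*Real.pi := by
      push_cast
      rw [show 2*(a:ℝ)/m = 2*((a:ℝ)/m) by ring, hra]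
      ring
    rw [e0, e1, abs_sin_shift, abs_sin_shift, Real.sin_neg, Real.sin_neg, abs_neg, abs_neg,
      abs_of_nonneg (sin_nat_nonneg m r (by omega) (by omega))]
    exact grid_nat m hm h3 r (by omega)

set_option maxHeartbeats 1000000 in
lemma F_bound (m : ℕ) (hm : 5 ≤ m) (h3 : m % 3 ≠ 0) :
    ∀ x : ℕ, 1 ≤ x → ∀ a : ℤ, ‖F ((a:ℝ)/(m:ℝ)) x‖ ≤ mu m * (x:ℝ)^(lam m) - nu m := by
  have hmu := mu_pos m hm h3
  have hnu := nu_pos m hm h3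
  have hlam := lam_nonneg m hm h3
  have hbpos := b_pos m hm h3
  have hbh := b_gt_half m hm h3
  have hbsq := b_sq m hm h3
  have hbsql := (bsq_bounds m hm h3).1
  intro x
  induction x using Nat.strong_induction_on with
  | _ x IH =>
  intro hx a
  -- general fact : for y ≥ 1, 1 ≤ (y:ℝ)^lam m
  have hone : ∀ y : ℕ, 1 ≤ y → (1:ℝ) ≤ (y:ℝ)^(lam m) := by
    intro y hy
    apply Real.one_le_rpow (by exact_mod_cast hy) hlam
  by_cases hx3 : x ≤ 3
  · -- base case
    have hFx : ‖F ((a:ℝ)/(m:ℝ)) x‖ ≤ x := abs_F_le _ _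
    have h2 : (3:ℝ) ≤ mu m * (2 * b m) - nu m := C2 m hm h3
    interval_cases x
    · rw [Nat.cast_one, Real.one_rpow]
      have := C1 m hm h3
      calc ‖F ((a:ℝ)/(m:ℝ)) 1‖ ≤ 1 := by exact_mod_cast hFx
      _ ≤ mu m * 1 - nu m := by linarith
    · have h2l : mu m * (2:ℝ)^(lam m) - nu m = mu m * (2*b m) - nu m := by
        rw [two_rpow_lam m hm h3]
      calc ‖F ((a:ℝ)/(m:ℝ)) 2‖ ≤ 2 := by exact_mod_cast hFx
      _ ≤ mu m * ((2:ℕ):ℝ)^(lam m) - nu m := by push_cast; linarith [h2l ▸ h2]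
    · have h23 : (2:ℝ)^(lam m) ≤ (3:ℝ)^(lam m) :=
        Real.rpow_le_rpow (by norm_num) (by norm_num) hlam
      have h2l : mu m * (2:ℝ)^(lam m) = mu m * (2*b m) := by rw [two_rpow_lam m hm h3]
      calc ‖F ((a:ℝ)/(m:ℝ)) 3‖ ≤ 3 := by exact_mod_cast hFx
      _ ≤ mu m * ((3:ℕ):ℝ)^(lam m) - nu m := by
          push_cast
          nlinarith [mul_le_mul_of_nonneg_left h23 (le_of_lt hmu)]
  · -- inductive step, x ≥ 4
    have hx4 : 4 ≤ x := by omega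
    have hgrid := grid m hm h3 a
    set α := (a:ℝ)/(m:ℝ) with hα
    set s0 := |Real.sin (Real.pi * α)| with hs0
    set s1 := |Real.sin (Real.pi * (((2*a:ℤ):ℝ)/(m:ℝ)))| with hs1
    have hs0n : 0 ≤ s0 := abs_nonneg _
    have hs1n : 0 ≤ s1 := abs_nonneg _
    have hs0le : s0 ≤ 1 := abs_le.mpr ⟨by linarith [Real.neg_one_le_sin (Real.pi * α)], Real.sin_le_one _⟩
    have h2eq : 2 * α = ((2*a:ℤ):ℝ)/(m:ℝ) := by push_cast; ring
    -- first application
    have hrec1 : ‖F α x‖ ≤ 2 * s0 * ‖F (((2*a:ℤ):ℝ)/(m:ℝ)) (x/2)‖ + 1 := by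
      have := F_rec α x
      rwa [h2eq] at this
    by_cases hmin : s0 ≤ s1
    · -- one-step case : s0^2 ≤ bsq
      have hf : s0 * s0 ≤ bsq m := by
        have hmin' : min s0 s1 = s0 := min_eq_left hmin
        rw [hmin'] at hgrid
        exact hgrid
      have hs0b : s0 ≤ b m := by nlinarith
      have hih : ‖F (((2*a:ℤ):ℝ)/(m:ℝ)) (x/2)‖ ≤ mu m * ((x/2 : ℕ):ℝ)^(lam m) - nu m := by
        apply IH (x/2) (by omega) (by omega) (2*a)
      have hR : (1:ℝ) ≤ mu m * ((x/2 : ℕ):ℝ)^(lam m) - nu m := by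
        have := hone (x/2) (by omega)
        have := C1 m hm h3
        nlinarith [hone (x/2) (by omega)]
      have hmono : ((x/2 : ℕ):ℝ)^(lam m) ≤ ((x:ℝ)/2)^(lam m) := by
        apply Real.rpow_le_rpow (by positivity) Nat.cast_div_le hlam
      have hxl : 2 * b m * ((x:ℝ)/2)^(lam m) = (x:ℝ)^(lam m) := by
        rw [Real.div_rpow (by positivity) (by norm_num), two_rpow_lam m hm h3]
        field_simp
      have hstep := step1 m hm h3
      calc ‖F α x‖ ≤ 2 * s0 * ‖F (((2*a:ℤ):ℝ)/(m:ℝ)) (x/2)‖ + 1 := hrec1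
        _ ≤ 2 * b m * (mu m * ((x/2 : ℕ):ℝ)^(lam m) - nu m) + 1 := by
            apply add_le_add_left
            apply mul_le_mul (by linarith) hih (norm_nonneg _) (by linarith)
        _ ≤ 2 * b m * (mu m * ((x:ℝ)/2)^(lam m) - nu m) + 1 := by
            have : mu m * ((x/2 : ℕ):ℝ)^(lam m) ≤ mu m * ((x:ℝ)/2)^(lam m) :=
              mul_le_mul_of_nonneg_left hmono (le_of_lt hmu)
            nlinarith
        _ ≤ mu m * (x:ℝ)^(lam m) - nu m := by
            have hxl' : 2 * b m * (mu m * ((x:ℝ)/2)^(lam m)) = mu m * (x:ℝ)^(lam m) := by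
              rw [← hxl]; ring
            linarith
    · -- two-step case : s0*s1 ≤ bsq
      push_neg at hmin
      have hf : s0 * s1 ≤ bsq m := by
        have hmin' : min s0 s1 = s1 := min_eq_right (le_of_lt hmin)
        rw [hmin'] at hgrid
        exact hgrid
      have h4eq : 2 * (((2*a:ℤ):ℝ)/(m:ℝ)) = ((2*(2*a):ℤ):ℝ)/(m:ℝ) := by push_cast; ring
      have hrec2 : ‖F (((2*a:ℤ):ℝ)/(m:ℝ)) (x/2)‖ ≤
          2 * s1 * ‖F ((((2*(2*a)):ℤ):ℝ)/(m:ℝ)) (x/2/2)‖ + 1 := by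
        have := F_rec (((2*a:ℤ):ℝ)/(m:ℝ)) (x/2)
        rwa [h4eq] at this
      have hih : ‖F ((((2*(2*a)):ℤ):ℝ)/(m:ℝ)) (x/2/2)‖ ≤
          mu m * ((x/2/2 : ℕ):ℝ)^(lam m) - nu m := by
        apply IH (x/2/2) (by omega) (by omega) (2*(2*a))
      have hR : (1:ℝ) ≤ mu m * ((x/2/2 : ℕ):ℝ)^(lam m) - nu m := by
        have := C1 m hm h3
        nlinarith [hone (x/2/2) (by omega)]
      have hmono : ((x/2/2 : ℕ):ℝ)^(lam m) ≤ ((x:ℝ)/4)^(lam m) := by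
        apply Real.rpow_le_rpow (by positivity) ?_ hlam
        have h1 : (x/2/2 : ℕ) = (x/4 : ℕ) := by omega
        rw [h1]
        calc ((x/4 : ℕ):ℝ) ≤ (x:ℝ)/(4:ℕ) := Nat.cast_div_le
        _ = (x:ℝ)/4 := by norm_num
      have hxl : 4 * bsq m * ((x:ℝ)/4)^(lam m) = (x:ℝ)^(lam m) := by
        rw [Real.div_rpow (by positivity) (by norm_num), four_rpow_lam m hm h3]
        field_simp
      have hstep := step2 m hm h3
      have habs2 : (0:ℝ) ≤ ‖F ((((2*(2*a)):ℤ):ℝ)/(m:ℝ)) (x/2/2)‖ := norm_nonneg _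
      have hcomb : ‖F α x‖ ≤
          4 * (s0*s1) * ‖F ((((2*(2*a)):ℤ):ℝ)/(m:ℝ)) (x/2/2)‖ + 2*s0 + 1 := by
        calc ‖F α x‖ ≤ 2 * s0 * ‖F (((2*a:ℤ):ℝ)/(m:ℝ)) (x/2)‖ + 1 := hrec1
        _ ≤ 2 * s0 * (2 * s1 * ‖F ((((2*(2*a)):ℤ):ℝ)/(m:ℝ)) (x/2/2)‖ + 1) + 1 := by
            apply add_le_add_left
            apply mul_le_mul_of_nonneg_left hrec2 (by linarith)
        _ = _ := by ring
      have hfin : 4 * (s0*s1) * ‖F ((((2*(2*a)):ℤ):ℝ)/(m:ℝ)) (x/2/2)‖ + 2*s0 + 1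
          ≤ mu m * (x:ℝ)^(lam m) - nu m := by
        have h1 : 4 * (s0*s1) * ‖F ((((2*(2*a)):ℤ):ℝ)/(m:ℝ)) (x/2/2)‖ ≤
            4 * bsq m * (mu m * ((x/2/2 : ℕ):ℝ)^(lam m) - nu m) := by
          apply mul_le_mul (by linarith) hih habs2 (by linarith)
        have h2 : 4 * bsq m * (mu m * ((x/2/2 : ℕ):ℝ)^(lam m) - nu m) ≤
            4 * bsq m * (mu m * ((x:ℝ)/4)^(lam m) - nu m) := by
          have : mu m * ((x/2/2 : ℕ):ℝ)^(lam m) ≤ mu m * ((x:ℝ)/4)^(lam m) :=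
            mul_le_mul_of_nonneg_left hmono (le_of_lt hmu)
          nlinarith
        have hxl' : 4 * bsq m * (mu m * ((x:ℝ)/4)^(lam m)) = mu m * (x:ℝ)^(lam m) := by
          rw [← hxl]; ring
        have h3' : 4 * bsq m * (mu m * ((x:ℝ)/4)^(lam m) - nu m)
            = mu m * (x:ℝ)^(lam m) - nu m - 3 := by
          rw [mul_sub, hxl']
          linarith [hstep]
        linarith
      linarith

theorem stmt_0 (m : ℕ) (hm : 5 ≤ m) (hgcd : Nat.gcd m 3 = 1) (x : ℕ) (hx : 1 ≤ x) :
    |S m x| ≤ mu m * (x : ℝ) ^ lam m := by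
  have h3 : m % 3 ≠ 0 := by
    intro h
    have : (3:ℕ) ∣ m := Nat.dvd_of_mod_eq_zero h
    have h4 : (3:ℕ) ∣ Nat.gcd m 3 := Nat.dvd_gcd this dvd_rfl
    rw [hgcd] at h4
    omega
  have hm0 : 0 < m := by omega
  have key : ∀ a ∈ Finset.range m,
      ‖F ((a:ℝ)/(m:ℝ)) x‖ ≤ mu m * (x:ℝ)^(lam m) - nu m := by
    intro a _
    have := F_bound m hm h3 x hx (a:ℤ)
    rwa [show (((a:ℕ):ℤ):ℝ) = ((a:ℕ):ℝ) by push_cast; ring] at this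
  have habs : ‖(m:ℂ) * ((S m x : ℝ):ℂ)‖ = (m:ℝ) * |S m x| := by
    rw [norm_mul, Complex.norm_natCast, Complex.norm_real, Real.norm_eq_abs]
  have h1 : (m:ℝ) * |S m x| ≤ (m:ℝ) * (mu m * (x:ℝ)^(lam m) - nu m) := by
    rw [← habs, S_eq m x hm0]
    refine le_trans (norm_sum_le _ _) ?_
    calc ∑ a ∈ Finset.range m, ‖F ((a:ℝ)/(m:ℝ)) x‖
        ≤ ∑ _a ∈ Finset.range m, (mu m * (x:ℝ)^(lam m) - nu m) := Finset.sum_le_sum key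
    _ = (m:ℝ) * (mu m * (x:ℝ)^(lam m) - nu m) := by
        rw [Finset.sum_const, Finset.card_range, nsmul_eq_mul]
  have hnu := nu_pos m hm h3
  have hmr : (0:ℝ) < m := by exact_mod_cast hm0
  have h2 : |S m x| ≤ mu m * (x:ℝ)^(lam m) - nu m := by
    exact le_of_mul_le_mul_left h1 hmr
  linarith
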